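/- For every 2-coloring of the edges of the complete graph on ℕ, there exist sets R, S ⊆ ℕ such that: (i) R ∪ S is cofinite in ℕ; (ii) if R is infinite then the red graph restricted to R is infinitely connected; and (iii) if S is infinite then the graph of one of the two colors restricted to S is infinitely connected. -/

import Mathlib

/-- The graph of color `col` in a 2-coloring `c` of the complete graph on `ℕ`. -/
def colorGraph (c : ℕ → ℕ → Bool) (col : Bool) : SimpleGraph ℕ :=
  SimpleGraph.fromRel (fun u v => c u v = col)

/-- `G` restricted to `S` is infinitely connected: it remains connected after
deleting any finite set of vertices. -/
def InfConnOn (G : SimpleGraph ℕ) (S : Set ℕ) : Prop :=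
  ∀ D : Set ℕ, D.Finite → (G.induce (S \ D)).Connected

namespace Stmt10
open Set Filter

def Nb (c : ℕ → ℕ → Bool) (b : Bool) (v : ℕ) : Set ℕ := {w | v ≠ w ∧ c v w = b}

lemma mem_Nb {c : ℕ → ℕ → Bool} {b v w} : w ∈ Nb c b v ↔ v ≠ w ∧ c v w = b := Iff.rfl

lemma bool_resolve {x W : Bool} (h : x ≠ W) : x = !W := by
  cases W <;> cases x <;> simp_all

lemma not_mem_Nb {c : ℕ → ℕ → Bool} {b v w} (hne : v ≠ w) (h : w ∉ Nb c b v) :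
    w ∈ Nb c (!b) v := by
  refine ⟨hne, bool_resolve fun hcb => h ⟨hne, hcb⟩⟩

lemma adj_iff {c : ℕ → ℕ → Bool} (hc : ∀ u v : ℕ, c u v = c v u) {b : Bool} {u v : ℕ} :
    (colorGraph c b).Adj u v ↔ u ≠ v ∧ c u v = b := by
  unfold colorGraph
  rw [SimpleGraph.fromRel_adj]
  constructor
  · rintro ⟨h, h2 | h2⟩
    · exact ⟨h, h2⟩
    · exact ⟨h, by rw [hc]; exact h2⟩
  · rintro ⟨h, h2⟩
    exact ⟨h, Or.inl h2⟩

lemma adj_of_mem {c : ℕ → ℕ → Bool} (hc : ∀ u v : ℕ, c u v = c v u) {b v w}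
    (h : w ∈ Nb c b v) : (colorGraph c b).Adj v w := (adj_iff hc).2 ⟨h.1, h.2⟩

def MyReach (G : SimpleGraph ℕ) (T : Set ℕ) : ℕ → ℕ → Prop :=
  Relation.ReflTransGen (fun a b => a ∈ T ∧ b ∈ T ∧ G.Adj a b)

lemma MyReach.mono {G : SimpleGraph ℕ} {T T' : Set ℕ} (h : T ⊆ T') {u v}
    (hr : MyReach G T u v) : MyReach G T' u v :=
  Relation.ReflTransGen.mono (fun a b hab => ⟨h hab.1, h hab.2.1, hab.2.2⟩) u v hr

lemma MyReach.symm {G : SimpleGraph ℕ} {T : Set ℕ} {u v} (h : MyReach G T u v) :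
    MyReach G T v u :=
  (@Relation.ReflTransGen.stdSymm _ _ ⟨fun a b hab => ⟨hab.2.1, hab.1, hab.2.2.symm⟩⟩).symm _ _ h

lemma MyReach.refl' {G : SimpleGraph ℕ} {T : Set ℕ} {u} : MyReach G T u u :=
  Relation.ReflTransGen.refl

lemma MyReach.step {G : SimpleGraph ℕ} {T : Set ℕ} {u v} (hu : u ∈ T) (hv : v ∈ T)
    (h : G.Adj u v) : MyReach G T u v :=
  Relation.ReflTransGen.single ⟨hu, hv, h⟩

lemma MyReach.trans' {G : SimpleGraph ℕ} {T : Set ℕ} {u v w} (h : MyReach G T u v)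
    (h2 : MyReach G T v w) : MyReach G T u w := Relation.ReflTransGen.trans h h2

lemma reachable_induce_of_myReach {G : SimpleGraph ℕ} {T : Set ℕ} {u v : ℕ}
    (h : MyReach G T u v) : ∀ (hu : u ∈ T) (hv : v ∈ T),
      (G.induce T).Reachable ⟨u, hu⟩ ⟨v, hv⟩ := by
  induction h with
  | refl => intro hu hv; rfl
  | @tail b v hub hstep ih =>
    intro hu hv
    exact (ih hu hstep.1).trans (SimpleGraph.Adj.reachable (by simpa using hstep.2.2))

lemma connected_induce_of_myReach {G : SimpleGraph ℕ} {T : Set ℕ}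
    (hne : T.Nonempty) (h : ∀ u ∈ T, ∀ v ∈ T, MyReach G T u v) : (G.induce T).Connected := by
  have : Nonempty ↥T := ⟨⟨hne.choose, hne.choose_spec⟩⟩
  refine ⟨fun x y => ?_⟩
  obtain ⟨u, hu⟩ := x
  obtain ⟨v, hv⟩ := y
  exact reachable_induce_of_myReach (h u hu v hv) hu hv

lemma myReach_of_walk {G : SimpleGraph ℕ} {T : Set ℕ} :
    ∀ {x y : ↥T} (_ : (G.induce T).Walk x y), MyReach G T x y := by
  intro x y w
  induction w with
  | nil => exact Relation.ReflTransGen.refl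
  | @cons a b d h p ih =>
    exact Relation.ReflTransGen.head ⟨a.2, b.2, by simpa using h⟩ ih

lemma myReach_of_connected_induce {G : SimpleGraph ℕ} {T : Set ℕ}
    (h : (G.induce T).Connected) {u v} (hu : u ∈ T) (hv : v ∈ T) : MyReach G T u v := by
  obtain ⟨w⟩ := h.preconnected ⟨u, hu⟩ ⟨v, hv⟩
  exact myReach_of_walk w

/-- connectivity from an anchor set -/
lemma conn_of_anchor {G : SimpleGraph ℕ} {T Anc : Set ℕ} (hAnc : Anc ⊆ T)
    (hne : Anc.Nonempty)
    (hreach : ∀ w ∈ T, ∃ a ∈ Anc, MyReach G T w a)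
    (hpair : ∀ a ∈ Anc, ∀ a' ∈ Anc, MyReach G T a a') : (G.induce T).Connected := by
  apply connected_induce_of_myReach ⟨hne.choose, hAnc hne.choose_spec⟩
  intro u hu v hv
  obtain ⟨a, ha, hra⟩ := hreach u hu
  obtain ⟨a', ha', hra'⟩ := hreach v hv
  exact (hra.trans' (hpair a ha a' ha')).trans' hra'.symm

lemma exists_uf {Z : Set ℕ} (hZ : Z.Infinite) :
    ∃ V : Ultrafilter ℕ, Z ∈ V ∧ ∀ B ∈ V, Set.Infinite B := by
  have hne : (Filter.cofinite ⊓ Filter.principal Z).NeBot := by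
    rw [Filter.inf_principal_neBot_iff]
    intro U hU
    have : (Z \ Uᶜ).Infinite := hZ.diff (by simpa using hU)
    exact this.nonempty.mono (fun x hx => ⟨by simpa using hx.2, hx.1⟩)
  refine ⟨Ultrafilter.of (Filter.cofinite ⊓ Filter.principal Z), ?_, ?_⟩
  · exact Ultrafilter.of_le _ (Filter.mem_inf_of_right (Filter.mem_principal_self Z))
  · intro B hB
    by_contra hfin
    rw [Set.not_infinite] at hfin
    have h1 : Bᶜ ∈ Ultrafilter.of (Filter.cofinite ⊓ Filter.principal Z) :=
      Ultrafilter.of_le _ (Filter.mem_inf_of_left hfin.compl_mem_cofinite)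
    have h2 : B ∩ Bᶜ ∈ Ultrafilter.of (Filter.cofinite ⊓ Filter.principal Z) :=
      Filter.inter_mem hB h1
    rw [Set.inter_compl_self] at h2
    exact Filter.empty_notMem _ h2

lemma nb_cover {c : ℕ → ℕ → Bool} (v : ℕ) :
    {v}ᶜ ⊆ Nb c true v ∪ Nb c false v := by
  intro w hw
  have hne : v ≠ w := by simpa [eq_comm] using hw
  rcases Bool.dichotomy (c v w) with h | h
  · exact Or.inr ⟨hne, h⟩
  · exact Or.inl ⟨hne, h⟩

lemma max_disjoint_family (pred : Set ℕ → Prop) :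
    ∃ F : Set (Set ℕ), (∀ Ξ ∈ F, pred Ξ) ∧
      (∀ Ξ₁ ∈ F, ∀ Ξ₂ ∈ F, Ξ₁ ≠ Ξ₂ → Disjoint Ξ₁ Ξ₂) ∧
      ∀ K, pred K → K.Nonempty → (∀ Ξ ∈ F, Disjoint K Ξ) → False := by
  obtain ⟨m, hm⟩ := zorn_subset
    {F : Set (Set ℕ) | (∀ Ξ ∈ F, pred Ξ) ∧
      ∀ Ξ₁ ∈ F, ∀ Ξ₂ ∈ F, Ξ₁ ≠ Ξ₂ → Disjoint Ξ₁ Ξ₂}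
    (by
      intro ch hch hchain
      refine ⟨⋃₀ ch, ⟨?_, ?_⟩, fun s hs => subset_sUnion_of_mem hs⟩
      · rintro Ξ ⟨F, hF, hΞ⟩
        exact (hch hF).1 Ξ hΞ
      · rintro Ξ₁ ⟨F₁, hF₁, hΞ₁⟩ Ξ₂ ⟨F₂, hF₂, hΞ₂⟩ hne
        rcases hchain.total hF₁ hF₂ with h | h
        · exact (hch hF₂).2 Ξ₁ (h hΞ₁) Ξ₂ hΞ₂ hne
        · exact (hch hF₁).2 Ξ₁ hΞ₁ Ξ₂ (h hΞ₂) hne)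
  refine ⟨m, hm.prop.1, hm.prop.2, ?_⟩
  intro K hK hKne hdisj
  have hins : insert K m ∈ {F : Set (Set ℕ) | (∀ Ξ ∈ F, pred Ξ) ∧
      ∀ Ξ₁ ∈ F, ∀ Ξ₂ ∈ F, Ξ₁ ≠ Ξ₂ → Disjoint Ξ₁ Ξ₂} := by
    constructor
    · rintro Ξ (rfl | hΞ)
      · exact hK
      · exact hm.prop.1 Ξ hΞ
    · rintro Ξ₁ (rfl | h₁) Ξ₂ (rfl | h₂) hne
      · exact absurd rfl hne
      · exact hdisj Ξ₂ h₂
      · exact (hdisj Ξ₁ h₁).symm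
      · exact hm.prop.2 Ξ₁ h₁ Ξ₂ h₂ hne
  have : insert K m ⊆ m := hm.2 hins (subset_insert K m)
  have hKm : K ∈ m := this (mem_insert K m)
  exact hKne.ne_empty (disjoint_self.mp (hdisj K hKm))

/-- From any infinite set extract an infinite subset on which some color is
infinitely connected. -/
lemma exists_usable {c : ℕ → ℕ → Bool} (hc : ∀ u v : ℕ, c u v = c v u)
    {Z : Set ℕ} (hZ : Z.Infinite) :
    ∃ (b : Bool) (B : Set ℕ), B ⊆ Z ∧ B.Infinite ∧ InfConnOn (colorGraph c b) B := by
  obtain ⟨V, hZV, hVinf⟩ := exists_uf hZ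
  have hsplit : Z ⊆ {z | z ∈ Z ∧ Nb c true z ∈ V} ∪ {z | z ∈ Z ∧ Nb c false z ∈ V} := by
    intro z hz
    have h1 : {z}ᶜ ∈ V := by
      rw [Ultrafilter.compl_mem_iff_notMem]
      intro h
      exact (Set.finite_singleton z).not_infinite (hVinf _ h)
    have h2 : Nb c true z ∪ Nb c false z ∈ V := Filter.mem_of_superset h1 (nb_cover z)
    rcases (Ultrafilter.union_mem_iff).mp h2 with h | h
    · exact Or.inl ⟨hz, h⟩
    · exact Or.inr ⟨hz, h⟩
  have hU : {z | z ∈ Z ∧ Nb c true z ∈ V} ∪ {z | z ∈ Z ∧ Nb c false z ∈ V} ∈ V :=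
    Filter.mem_of_superset hZV hsplit
  have hB : ∃ b : Bool, {z | z ∈ Z ∧ Nb c b z ∈ V} ∈ V := by
    rcases (Ultrafilter.union_mem_iff).mp hU with h | h
    · exact ⟨true, h⟩
    · exact ⟨false, h⟩
  obtain ⟨b, hBV⟩ := hB
  set B := {z | z ∈ Z ∧ Nb c b z ∈ V} with hBdef
  refine ⟨b, B, fun z hz => hz.1, hVinf _ hBV, ?_⟩
  intro D hD
  apply conn_of_anchor (Anc := B \ D) (le_refl _) ((hVinf _ hBV).diff hD).nonempty
    (fun w hw => ⟨w, hw, MyReach.refl'⟩)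
  intro u hu v hv
  by_cases huv : u = v
  · subst huv; exact MyReach.refl'
  have hcommon : Nb c b u ∩ Nb c b v ∩ B ∈ V :=
    Filter.inter_mem (Filter.inter_mem hu.1.2 hv.1.2) hBV
  obtain ⟨x, hx⟩ := ((hVinf _ hcommon).diff (hD.union (Set.finite_singleton u |>.union
    (Set.finite_singleton v)))).nonempty
  have hxB : x ∈ B := hx.1.2
  have hxD : x ∉ D := fun h => hx.2 (Or.inl h)
  refine (MyReach.step hu ⟨hxB, hxD⟩ (adj_of_mem hc hx.1.1.1)).trans'
    ((MyReach.step hv ⟨hxB, hxD⟩ (adj_of_mem hc hx.1.1.2)).symm)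

end Stmt10

namespace Stmt10
open Set Filter

lemma assign {c : ℕ → ℕ → Bool} (W : Bool) (P Q : Set ℕ)
    (hP : InfConnOn (colorGraph c W) P)
    (hQ : Q.Infinite → InfConnOn (colorGraph c (!W)) Q)
    (hcov : (P ∪ Q)ᶜ.Finite) :
    ∃ R S : Set ℕ, (R ∪ S)ᶜ.Finite ∧
      (R.Infinite → InfConnOn (colorGraph c true) R) ∧
      (S.Infinite → ∃ col : Bool, InfConnOn (colorGraph c col) S) := by
  cases W with
  | true => exact ⟨P, Q, hcov, fun _ => hP, fun hQi => ⟨false, hQ hQi⟩⟩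
  | false =>
    exact ⟨Q, P, by rwa [Set.union_comm], fun hQi => hQ hQi, fun _ => ⟨false, hP⟩⟩

lemma empty_not_infinite : ¬ (∅ : Set ℕ).Infinite := fun h => h Set.finite_empty

end Stmt10

open Stmt10 in
theorem stmt_10 (c : ℕ → ℕ → Bool) (hc : ∀ u v : ℕ, c u v = c v u) :
    ∃ R S : Set ℕ,
      (R ∪ S)ᶜ.Finite ∧
      (R.Infinite → InfConnOn (colorGraph c true) R) ∧
      (S.Infinite → ∃ col : Bool, InfConnOn (colorGraph c col) S) := by
  classical
  obtain ⟨U, -, hUinf⟩ := exists_uf (Set.infinite_univ (α := ℕ))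
  -- choose the dominant color W
  obtain ⟨W, hAU⟩ : ∃ Wb : Bool, {v : ℕ | Nb c Wb v ∈ U} ∈ U := by
    have hsub : (Set.univ : Set ℕ) ⊆ {v | Nb c true v ∈ U} ∪ {v | Nb c false v ∈ U} := by
      intro v _
      have h1 : ({v}ᶜ : Set ℕ) ∈ U := by
        rw [Ultrafilter.compl_mem_iff_notMem]
        intro h
        exact (Set.finite_singleton v).not_infinite (hUinf _ h)
      have h2 := Filter.mem_of_superset h1 (nb_cover (c := c) v)
      rcases (Ultrafilter.union_mem_iff).mp h2 with h | h
      · exact Or.inl h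
      · exact Or.inr h
    have hu : {v : ℕ | Nb c true v ∈ U} ∪ {v : ℕ | Nb c false v ∈ U} ∈ U :=
      Filter.mem_of_superset Filter.univ_mem hsub
    rcases (Ultrafilter.union_mem_iff).mp hu with h | h
    · exact ⟨true, h⟩
    · exact ⟨false, h⟩
  have hAinf : {v : ℕ | Nb c W v ∈ U}.Infinite := hUinf _ hAU
  set A : Set ℕ := {v : ℕ | Nb c W v ∈ U} with hAdef
  set N : Set ℕ := {w : ℕ | (Nb c W w ∩ A).Infinite} with hNdef
  have hAN : A ⊆ N := fun a ha => hUinf _ (Filter.inter_mem ha hAU)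
  -- reaching the anchor A inside any superset of N
  have hNreachT : ∀ (T : Set ℕ), N ⊆ T → ∀ (D : Set ℕ), D.Finite → ∀ w ∈ N \ D,
      ∃ a ∈ A \ D, MyReach (colorGraph c W) (T \ D) w a := by
    intro T hNT D hD w hw
    obtain ⟨x, hx⟩ := (hw.1.diff hD).nonempty
    refine ⟨x, ⟨hx.1.2, hx.2⟩, MyReach.step ⟨hNT hw.1, hw.2⟩
      ⟨hNT (hAN hx.1.2), hx.2⟩ (adj_of_mem hc hx.1.1)⟩
  -- pairs of A-elements are joined inside any superset of N
  have hApairT : ∀ (T : Set ℕ), N ⊆ T → ∀ (D : Set ℕ), D.Finite → ∀ a ∈ A \ D, ∀ a' ∈ A \ D,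
      MyReach (colorGraph c W) (T \ D) a a' := by
    intro T hNT D hD a ha a' ha'
    have hcom : Nb c W a ∩ Nb c W a' ∩ A ∈ U :=
      Filter.inter_mem (Filter.inter_mem ha.1 ha'.1) hAU
    obtain ⟨x, hx⟩ := ((hUinf _ hcom).diff hD).nonempty
    have hxT : x ∈ T \ D := ⟨hNT (hAN hx.1.2), hx.2⟩
    have haT : a ∈ T \ D := ⟨hNT (hAN ha.1), ha.2⟩
    have haT' : a' ∈ T \ D := ⟨hNT (hAN ha'.1), ha'.2⟩
    exact (MyReach.step haT hxT (adj_of_mem hc hx.1.1.1)).trans'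
      (MyReach.step hxT haT' (adj_of_mem hc hx.1.1.2).symm)
  have hNconn : InfConnOn (colorGraph c W) N := by
    intro D hD
    exact conn_of_anchor (Anc := A \ D) (fun x hx => ⟨hAN hx.1, hx.2⟩)
      ((hAinf.diff hD).nonempty) (hNreachT N (fun x h => h) D hD)
      (hApairT N (fun x h => h) D hD)
  -- the leftover set Y = Nᶜ ; its elements are (¬W)-stars onto A
  have hYexc : ∀ y ∈ Nᶜ, (Nb c W y ∩ A).Finite := fun y hy => Set.not_infinite.mp hy
  have hYstar : ∀ y ∈ Nᶜ, ∀ a ∈ A, a ∉ Nb c W y ∩ A → y ≠ a → a ∈ Nb c (!W) y := by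
    intro y hy a ha hnotin hne
    exact not_mem_Nb hne (fun h => hnotin ⟨h, ha⟩)
  by_cases hYinf : (Nᶜ : Set ℕ).Infinite
  swap
  · -- Y finite : a single piece suffices
    refine assign W N ∅ hNconn (fun h => absurd h empty_not_infinite) ?_
    simpa using Set.not_infinite.mp hYinf
  -- G : vertices of A with infinitely many (¬W)-edges into Y
  by_cases hGinf : {a | a ∈ A ∧ (Nb c (!W) a ∩ Nᶜ).Infinite}.Infinite
  · -- Case 1 : Y ∪ G is (¬W)-infinitely connected
    set G : Set ℕ := {a | a ∈ A ∧ (Nb c (!W) a ∩ Nᶜ).Infinite} with hGdef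
    have hPconn : InfConnOn (colorGraph c (!W)) (Nᶜ ∪ G) := by
      intro D hD
      refine conn_of_anchor (Anc := Nᶜ \ D) (fun x hx => ⟨Or.inl hx.1, hx.2⟩)
        ((hYinf.diff hD).nonempty) ?_ ?_
      · rintro w ⟨hw | hw, hwD⟩
        · exact ⟨w, ⟨hw, hwD⟩, MyReach.refl'⟩
        · obtain ⟨y, hy⟩ := (hw.2.diff hD).nonempty
          exact ⟨y, ⟨hy.1.2, hy.2⟩, MyReach.step ⟨Or.inr hw, hwD⟩
            ⟨Or.inl hy.1.2, hy.2⟩ (adj_of_mem hc hy.1.1)⟩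
      · intro y hy y' hy'
        obtain ⟨g, hg⟩ := ((((hGinf.diff (hYexc y hy.1)).diff (hYexc y' hy'.1)).diff
          hD).diff ((Set.finite_singleton y).union (Set.finite_singleton y'))).nonempty
        have hgP : g ∈ (Nᶜ ∪ G) \ D := ⟨Or.inr hg.1.1.1.1, hg.1.2⟩
        have hadj1 : g ∈ Nb c (!W) y := hYstar y hy.1 g hg.1.1.1.1.1 hg.1.1.1.2
          (fun h => hg.2 (Or.inl h.symm))
        have hadj2 : g ∈ Nb c (!W) y' := hYstar y' hy'.1 g hg.1.1.1.1.1 hg.1.1.2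
          (fun h => hg.2 (Or.inr h.symm))
        have hyP : y ∈ (Nᶜ ∪ G) \ D := ⟨Or.inl hy.1, hy.2⟩
        have hyP' : y' ∈ (Nᶜ ∪ G) \ D := ⟨Or.inl hy'.1, hy'.2⟩
        exact (MyReach.step hyP hgP (adj_of_mem hc hadj1)).trans'
          (MyReach.step hgP hyP' (adj_of_mem hc hadj2).symm)
    refine assign W N (Nᶜ ∪ G) hNconn (fun _ => hPconn) ?_
    have : (N ∪ (Nᶜ ∪ G))ᶜ = ∅ := by
      rw [Set.eq_empty_iff_forall_notMem]
      intro x hx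
      exact hx (Or.inl (by by_contra h; exact hx (Or.inr (Or.inl h))))
    rw [this]; exact Set.finite_empty
  -- Case 2 : G is finite, almost all of A are W-stars onto Y
  have hGfin : {a | a ∈ A ∧ (Nb c (!W) a ∩ Nᶜ).Infinite}.Finite := Set.not_infinite.mp hGinf
  have hAstarexc : ∀ a ∈ A \ {a | a ∈ A ∧ (Nb c (!W) a ∩ Nᶜ).Infinite},
      (Nb c (!W) a ∩ Nᶜ).Finite := by
    intro a ha
    by_contra h
    exact ha.2 ⟨ha.1, h⟩
  have hAstar : ∀ a ∈ A \ {a | a ∈ A ∧ (Nb c (!W) a ∩ Nᶜ).Infinite},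
      ∀ y ∈ (Nᶜ : Set ℕ), y ∉ Nb c (!W) a ∩ Nᶜ → a ≠ y → y ∈ Nb c W a := by
    intro a ha y hy hnotin hne
    have h := not_mem_Nb hne (fun h => hnotin ⟨h, hy⟩)
    rwa [Bool.not_not] at h
  -- maximal disjoint family of W-usable subsets of Y
  obtain ⟨Fam, hFamPred, hFamDisj, hFamMax⟩ := max_disjoint_family
    (fun Ξ => Ξ ⊆ Nᶜ ∧ Ξ.Infinite ∧ InfConnOn (colorGraph c W) Ξ)
  set PW : Set ℕ := N ∪ ⋃₀ Fam ∪ {w | ∃ Ξ ∈ Fam, (Nb c W w ∩ Ξ).Infinite} with hPWdef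
  have hNPW : N ⊆ PW := fun x hx => Or.inl (Or.inl hx)
  have hPWconn : InfConnOn (colorGraph c W) PW := by
    intro D hD
    have reachXi : ∀ Ξ ∈ Fam, ∀ x ∈ Ξ \ D,
        ∃ a ∈ A \ D, MyReach (colorGraph c W) (PW \ D) x a := by
      intro Ξ hΞ x hx
      obtain ⟨hΞY, hΞinf, hΞconn⟩ := hFamPred Ξ hΞ
      obtain ⟨a, ha⟩ := ((hAinf.diff hGfin).diff hD).nonempty
      obtain ⟨y, hy⟩ := (((hΞinf.diff hD).diff (hAstarexc a ha.1)).diff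
        (Set.finite_singleton a)).nonempty
      have hyT : y ∈ Ξ \ D := hy.1.1
      have hint : MyReach (colorGraph c W) (Ξ \ D) x y :=
        myReach_of_connected_induce (hΞconn D hD) hx hyT
      have hΞPW : Ξ \ D ⊆ PW \ D := fun t ht => ⟨Or.inl (Or.inr ⟨Ξ, hΞ, ht.1⟩), ht.2⟩
      have hyNb : y ∈ Nb c W a := hAstar a ha.1 y (hΞY hyT.1) hy.1.2 (fun h => hy.2 h.symm)
      have haPW : a ∈ PW \ D := ⟨hNPW (hAN ha.1.1), ha.2⟩
      exact ⟨a, ⟨ha.1.1, ha.2⟩, (hint.mono hΞPW).trans'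
        (MyReach.step (hΞPW hyT) haPW (adj_of_mem hc hyNb).symm)⟩
    refine conn_of_anchor (Anc := A \ D) (fun x hx => ⟨hNPW (hAN hx.1), hx.2⟩)
      ((hAinf.diff hD).nonempty) ?_ (hApairT PW hNPW D hD)
    rintro w ⟨(hw | hw) | hw, hwD⟩
    · exact hNreachT PW hNPW D hD w ⟨hw, hwD⟩
    · obtain ⟨Ξ, hΞ, hx⟩ := hw
      exact reachXi Ξ hΞ w ⟨hx, hwD⟩
    · obtain ⟨Ξ, hΞ, hwΞ⟩ := hw
      obtain ⟨ξ, hξ⟩ := (hwΞ.diff hD).nonempty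
      have hwPW : w ∈ PW \ D := ⟨Or.inr ⟨Ξ, hΞ, hwΞ⟩, hwD⟩
      have hξT : ξ ∈ Ξ \ D := ⟨hξ.1.2, hξ.2⟩
      have hξPW : ξ ∈ PW \ D := ⟨Or.inl (Or.inr ⟨Ξ, hΞ, hξ.1.2⟩), hξ.2⟩
      obtain ⟨a, ha, hra⟩ := reachXi Ξ hΞ ξ hξT
      exact ⟨a, ha, (MyReach.step hwPW hξPW (adj_of_mem hc hξ.1.1)).trans' hra⟩
  -- the final leftover Z
  have hZY : (PWᶜ : Set ℕ) ⊆ Nᶜ := fun z hz h => hz (hNPW h)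
  by_cases hZfin : (PWᶜ : Set ℕ).Finite
  · refine assign W PW ∅ hPWconn (fun h => absurd h empty_not_infinite) ?_
    rw [Set.union_empty]; exact hZfin
  have hZinf : (PWᶜ : Set ℕ).Infinite := hZfin
  have Z1 : ∀ Ξ', Ξ' ⊆ (PWᶜ : Set ℕ) → Ξ'.Infinite →
      InfConnOn (colorGraph c W) Ξ' → False := by
    intro Ξ' hsub hinf hconn
    refine hFamMax Ξ' ⟨hsub.trans hZY, hinf, hconn⟩ hinf.nonempty ?_
    intro Ξ hΞ
    exact Set.disjoint_left.mpr (fun x hx hx2 => (hsub hx) (Or.inl (Or.inr ⟨Ξ, hΞ, hx2⟩)))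
  have husable : ∀ Z', Z' ⊆ (PWᶜ : Set ℕ) → Z'.Infinite →
      ∃ B, B ⊆ Z' ∧ B.Infinite ∧ InfConnOn (colorGraph c (!W)) B := by
    intro Z' hsub hinf
    obtain ⟨b, B, hBsub, hBinf, hBconn⟩ := exists_usable hc hinf
    by_cases hbW : b = W
    · exact (Z1 B (hBsub.trans hsub) hBinf (hbW ▸ hBconn)).elim
    · exact ⟨B, hBsub, hBinf, (bool_resolve hbW) ▸ hBconn⟩
  obtain ⟨KF, hKpred, hKdisj, hKmax⟩ := max_disjoint_family
    (fun K => K ⊆ (PWᶜ : Set ℕ) ∧ K.Infinite ∧ InfConnOn (colorGraph c (!W)) K)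
  set PC : Set ℕ := ⋃₀ KF ∪ {w | ∃ K ∈ KF, (Nb c (!W) w ∩ K).Infinite} with hPCdef
  have hZPC : ((PWᶜ : Set ℕ) \ PC).Finite := by
    by_contra h
    obtain ⟨B, hBsub, hBinf, hBconn⟩ := husable _ Set.diff_subset h
    refine hKmax B ⟨hBsub.trans Set.diff_subset, hBinf, hBconn⟩ hBinf.nonempty ?_
    intro K hK
    exact Set.disjoint_left.mpr (fun x hx hxK => (hBsub hx).2 (Or.inl ⟨K, hK, hxK⟩))
  have hPCinf : PC.Infinite := by
    refine (hZinf.diff hZPC).mono (fun x hx => ?_)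
    by_contra hxPC
    exact hx.2 ⟨hx.1, hxPC⟩
  -- linkage between members of KF
  have hlink : ∀ K ∈ KF, ∀ K' ∈ KF, K ≠ K' →
      {x | (x ∈ K ∧ (Nb c (!W) x ∩ K').Infinite) ∨
           (x ∈ K' ∧ (Nb c (!W) x ∩ K).Infinite)}.Infinite := by
    intro K hK K' hK' hne
    set L : Set ℕ := {x | (x ∈ K ∧ (Nb c (!W) x ∩ K').Infinite) ∨
           (x ∈ K' ∧ (Nb c (!W) x ∩ K).Infinite)} with hLdef
    by_contra hLfin'
    have hLfin : L.Finite := Set.not_infinite.mp hLfin'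
    obtain ⟨hKZ, hKinf, hKconn⟩ := hKpred K hK
    obtain ⟨hK'Z, hK'inf, hK'conn⟩ := hKpred K' hK'
    have hE1 : ∀ k ∈ K \ L, (Nb c (!W) k ∩ K').Finite := by
      intro k hk; by_contra h; exact hk.2 (Or.inl ⟨hk.1, h⟩)
    have hE2 : ∀ k ∈ K' \ L, (Nb c (!W) k ∩ K).Finite := by
      intro k hk; by_contra h; exact hk.2 (Or.inr ⟨hk.1, h⟩)
    have hstar1 : ∀ k ∈ K \ L, ∀ x ∈ K', x ∉ Nb c (!W) k ∩ K' → k ≠ x → x ∈ Nb c W k := by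
      intro k hk x hx hnot hne2
      have h := not_mem_Nb hne2 (fun hh => hnot ⟨hh, hx⟩)
      rwa [Bool.not_not] at h
    have hstar2 : ∀ k ∈ K' \ L, ∀ x ∈ K, x ∉ Nb c (!W) k ∩ K → k ≠ x → x ∈ Nb c W k := by
      intro k hk x hx hnot hne2
      have h := not_mem_Nb hne2 (fun hh => hnot ⟨hh, hx⟩)
      rwa [Bool.not_not] at h
    have husable2 : InfConnOn (colorGraph c W) ((K \ L) ∪ (K' \ L)) := by
      intro D hD
      refine conn_of_anchor (Anc := (K' \ L) \ D) (fun x hx => ⟨Or.inr hx.1, hx.2⟩)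
        (((hK'inf.diff hLfin).diff hD).nonempty) ?_ ?_
      · rintro w ⟨hw | hw, hwD⟩
        · obtain ⟨x, hx⟩ := ((((hK'inf.diff hLfin).diff hD).diff (hE1 w hw)).diff
            (Set.finite_singleton w)).nonempty
          have hxNb : x ∈ Nb c W w := hstar1 w hw x hx.1.1.1.1 hx.1.2 (fun h => hx.2 h.symm)
          exact ⟨x, ⟨hx.1.1.1, hx.1.1.2⟩, MyReach.step ⟨Or.inl hw, hwD⟩
            ⟨Or.inr hx.1.1.1, hx.1.1.2⟩ (adj_of_mem hc hxNb)⟩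
        · exact ⟨w, ⟨hw, hwD⟩, MyReach.refl'⟩
      · intro u hu v hv
        obtain ⟨x, hx⟩ := (((((hKinf.diff hLfin).diff hD).diff (hE2 u hu.1)).diff
          (hE2 v hv.1)).diff ((Set.finite_singleton u).union (Set.finite_singleton v))).nonempty
        have hx1 : x ∈ Nb c W u := hstar2 u hu.1 x hx.1.1.1.1.1 hx.1.1.2
          (fun h => hx.2 (Or.inl h.symm))
        have hx2 : x ∈ Nb c W v := hstar2 v hv.1 x hx.1.1.1.1.1 hx.1.2
          (fun h => hx.2 (Or.inr h.symm))
        have hxT : x ∈ ((K \ L) ∪ (K' \ L)) \ D := ⟨Or.inl hx.1.1.1.1, hx.1.1.1.2⟩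
        have huT : u ∈ ((K \ L) ∪ (K' \ L)) \ D := ⟨Or.inr hu.1, hu.2⟩
        have hvT : v ∈ ((K \ L) ∪ (K' \ L)) \ D := ⟨Or.inr hv.1, hv.2⟩
        exact (MyReach.step huT hxT (adj_of_mem hc hx1)).trans'
          (MyReach.step hxT hvT (adj_of_mem hc hx2).symm)
    exact Z1 _ (Set.union_subset (Set.diff_subset.trans hKZ) (Set.diff_subset.trans hK'Z))
      ((hKinf.diff hLfin).mono Set.subset_union_left) husable2
  -- connectivity of the second piece
  have hPCconn : InfConnOn (colorGraph c (!W)) PC := by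
    intro D hD
    obtain ⟨K₀, hK₀⟩ : ∃ K, K ∈ KF := by
      obtain ⟨x, hx⟩ := hPCinf.nonempty
      rcases hx with ⟨K, hK, -⟩ | ⟨K, hK, -⟩ <;> exact ⟨K, hK⟩
    have hint : ∀ K ∈ KF, ∀ u ∈ K \ D, ∀ v ∈ K \ D,
        MyReach (colorGraph c (!W)) (PC \ D) u v := by
      intro K hK u hu v hv
      exact (myReach_of_connected_induce ((hKpred K hK).2.2 D hD) hu hv).mono
        (show K \ D ⊆ PC \ D from fun t ht => ⟨Or.inl ⟨K, hK, ht.1⟩, ht.2⟩)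
    refine conn_of_anchor (Anc := (⋃₀ KF) \ D)
      (fun x hx => ⟨Or.inl hx.1, hx.2⟩) ?_ ?_ ?_
    · obtain ⟨k, hk⟩ := (((hKpred K₀ hK₀).2.1).diff hD).nonempty
      exact ⟨k, ⟨⟨K₀, hK₀, hk.1⟩, hk.2⟩⟩
    · rintro w ⟨hw | hw, hwD⟩
      · exact ⟨w, ⟨hw, hwD⟩, MyReach.refl'⟩
      · obtain ⟨K, hK, hwK⟩ := hw
        obtain ⟨k, hk⟩ := (hwK.diff hD).nonempty
        exact ⟨k, ⟨⟨K, hK, hk.1.2⟩, hk.2⟩, MyReach.step ⟨Or.inr ⟨K, hK, hwK⟩, hwD⟩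
          ⟨Or.inl ⟨K, hK, hk.1.2⟩, hk.2⟩ (adj_of_mem hc hk.1.1)⟩
    · intro a ha a' ha'
      obtain ⟨K, hK, haK⟩ := ha.1
      obtain ⟨K', hK', haK'⟩ := ha'.1
      by_cases hKK : K = K'
      · subst hKK
        exact hint K hK a ⟨haK, ha.2⟩ a' ⟨haK', ha'.2⟩
      · obtain ⟨l, hl⟩ := ((hlink K hK K' hK' hKK).diff hD).nonempty
        rcases hl.1 with ⟨hlK, hlinf⟩ | ⟨hlK', hlinf⟩
        · obtain ⟨x, hx⟩ := (hlinf.diff hD).nonempty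
          have h1 : MyReach (colorGraph c (!W)) (PC \ D) a l :=
            hint K hK a ⟨haK, ha.2⟩ l ⟨hlK, hl.2⟩
          have hlPC : l ∈ PC \ D := ⟨Or.inl ⟨K, hK, hlK⟩, hl.2⟩
          have hxPC : x ∈ PC \ D := ⟨Or.inl ⟨K', hK', hx.1.2⟩, hx.2⟩
          have hstep : MyReach (colorGraph c (!W)) (PC \ D) l x :=
            MyReach.step hlPC hxPC (adj_of_mem hc hx.1.1)
          have h2 : MyReach (colorGraph c (!W)) (PC \ D) x a' :=
            hint K' hK' x ⟨hx.1.2, hx.2⟩ a' ⟨haK', ha'.2⟩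
          exact (h1.trans' hstep).trans' h2
        · obtain ⟨x, hx⟩ := (hlinf.diff hD).nonempty
          have h1 : MyReach (colorGraph c (!W)) (PC \ D) a x :=
            hint K hK a ⟨haK, ha.2⟩ x ⟨hx.1.2, hx.2⟩
          have hlPC : l ∈ PC \ D := ⟨Or.inl ⟨K', hK', hlK'⟩, hl.2⟩
          have hxPC : x ∈ PC \ D := ⟨Or.inl ⟨K, hK, hx.1.2⟩, hx.2⟩
          have hstep : MyReach (colorGraph c (!W)) (PC \ D) x l :=
            (MyReach.step hlPC hxPC (adj_of_mem hc hx.1.1)).symm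
          have h2 : MyReach (colorGraph c (!W)) (PC \ D) l a' :=
            hint K' hK' l ⟨hlK', hl.2⟩ a' ⟨haK', ha'.2⟩
          exact (h1.trans' hstep).trans' h2
  refine assign W PW PC hPWconn (fun _ => hPCconn) (hZPC.subset ?_)
  intro x hx
  simp only [Set.mem_compl_iff, Set.mem_union, not_or] at hx
  exact ⟨hx.1, hx.2⟩
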